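/- Let Z be an m×n Young diagram (left-aligned binary array) with dynamical indices d = (d₁,…,d_m), dᵢ = number of ones in row i, ∑dᵢ = n. Then the number of admissible numbered Young diagrams Y with the same left-aligned support pattern as Z equals p_B!, where p_B is the number of indices i with dᵢ > 0. -/

import Mathlib

set_option linter.unusedSectionVars false

namespace Stmt9

open Finset

variable {m : ℕ}

/-- number of cells at distance `< t` from row ends -/
def S (d : Fin m → ℕ) (t : ℕ) : ℕ := ∑ i, min (d i) t

/-- number of rows present at distance `t` with smaller rank than row `i` -/
def C (d rk : Fin m → ℕ) (i : Fin m) (t : ℕ) : ℕ :=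
  (Finset.univ.filter fun i' => t < d i' ∧ rk i' < rk i).card

def val (n : ℕ) (d rk : Fin m → ℕ) (i : Fin m) (t : ℕ) : ℕ := n - S d t - C d rk i t

def F (n : ℕ) (d rk : Fin m → ℕ) (i : Fin m) (j : ℕ) : ℕ :=
  if 1 ≤ j ∧ j ≤ d i then val n d rk i (d i - j) else 0

lemma S_zero (d : Fin m → ℕ) : S d 0 = 0 := by simp [S]

lemma S_succ (d : Fin m → ℕ) (t : ℕ) :
    S d (t + 1) = S d t + (Finset.univ.filter fun i => t < d i).card := by
  rw [S, S, Finset.card_filter, ← Finset.sum_add_distrib]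
  refine Finset.sum_congr rfl fun i _ => ?_
  by_cases h : t < d i <;> simp [h] <;> omega

lemma S_mono (d : Fin m → ℕ) {t t' : ℕ} (h : t ≤ t') : S d t ≤ S d t' :=
  Finset.sum_le_sum fun i _ => by omega

lemma S_le (d : Fin m → ℕ) {n : ℕ} (hd : ∑ i, d i = n) (t : ℕ) : S d t ≤ n := by
  rw [← hd]; exact Finset.sum_le_sum fun i _ => min_le_left _ _

lemma C_lt_C (d rk : Fin m → ℕ) {i i' : Fin m} {t : ℕ} (hti : t < d i)
    (hr : rk i < rk i') : C d rk i t < C d rk i' t := by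
  apply Finset.card_lt_card
  rw [Finset.ssubset_iff_of_subset]
  · exact ⟨i, by simp [hti, hr]⟩
  · intro x hx
    simp only [Finset.mem_filter] at hx ⊢
    exact ⟨hx.1, hx.2.1, hx.2.2.trans hr⟩

lemma C_succ_le (d rk : Fin m → ℕ) {i : Fin m} {t : ℕ} (hti : t < d i) :
    C d rk i t + 1 ≤ (Finset.univ.filter fun i' => t < d i').card := by
  have h : insert i (Finset.univ.filter fun i' => t < d i' ∧ rk i' < rk i)
      ⊆ Finset.univ.filter fun i' => t < d i' := by
    intro x hx
    rcases Finset.mem_insert.mp hx with h | h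
    · simp [h, hti]
    · simp only [Finset.mem_filter] at h ⊢; exact ⟨h.1, h.2.1⟩
  have := Finset.card_le_card h
  rwa [Finset.card_insert_of_notMem (by simp)] at this

lemma val_spec (n : ℕ) (d rk : Fin m → ℕ) {i : Fin m} {t : ℕ}
    (hd : ∑ i, d i = n) (hti : t < d i) :
    S d t + C d rk i t + val n d rk i t = n ∧ S d t + C d rk i t < S d (t + 1) := by
  have h1 := C_succ_le d rk hti
  have h2 := S_succ d t
  have h3 := S_le d hd (t + 1)
  constructor
  · unfold val; omega
  · omega

lemma val_lt_val {n : ℕ} (d rk : Fin m → ℕ) {i i' : Fin m} {t t' : ℕ}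
    (hd : ∑ i, d i = n) (hti : t < d i) (hti' : t' < d i')
    (h : t < t' ∨ (t = t' ∧ rk i < rk i')) : val n d rk i' t' < val n d rk i t := by
  have h1 := val_spec n d rk hd hti
  have h2 := val_spec n d rk hd hti'
  rcases h with h | ⟨rfl, h⟩
  · have := S_mono d (show t + 1 ≤ t' by omega)
    omega
  · have := C_lt_C d rk hti h
    omega


section Rank
variable {n pB : ℕ} {d rk : Fin m → ℕ}
  (hrk_img : (Finset.univ.filter fun i => 0 < d i).image rk = Finset.range pB)
  (hrk_inj : Set.InjOn rk {i | 0 < d i})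

include hrk_img in
lemma rk_lt {i : Fin m} (h : 0 < d i) : rk i < pB := by
  have : rk i ∈ Finset.range pB := by
    rw [← hrk_img]
    exact Finset.mem_image_of_mem rk (by simp [h])
  simpa using this

include hrk_img hrk_inj in
lemma card_rk_lt {r : ℕ} (hr : r ≤ pB) :
    (Finset.univ.filter fun i => 0 < d i ∧ rk i < r).card = r := by
  have h0 : (Finset.univ.filter fun i => 0 < d i ∧ rk i < r)
      = (Finset.univ.filter fun i => 0 < d i).filter fun i => rk i < r := by
    rw [Finset.filter_filter]
  have h1 : (Finset.range pB).filter (fun x => x < r)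
      = (((Finset.univ.filter fun i => 0 < d i).filter fun i => rk i < r).image rk) := by
    rw [← hrk_img, Finset.filter_image]
  have h2 : (Finset.range pB).filter (fun x => x < r) = Finset.range r := by
    ext x; simp; omega
  have h3 : Set.InjOn rk (((Finset.univ.filter fun i => 0 < d i).filter
      fun i => rk i < r) : Finset (Fin m)) := by
    intro x hx y hy hxy
    simp only [Finset.coe_filter, Set.mem_setOf_eq, Finset.mem_filter] at hx hy
    exact hrk_inj (by simp [hx.1.2]) (by simp [hy.1.2]) hxy
  rw [h0, ← Finset.card_image_of_injOn h3, ← h1, h2, Finset.card_range]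

include hrk_img hrk_inj in
lemma C_zero_eq_rk {i : Fin m} (h : 0 < d i) : C d rk i 0 = rk i :=
  card_rk_lt hrk_img hrk_inj (le_of_lt (rk_lt hrk_img h))

include hrk_inj in
lemma val_lt_iff (hd : ∑ i, d i = n) {i i' : Fin m} {t t' : ℕ}
    (hti : t < d i) (hti' : t' < d i') :
    val n d rk i' t' < val n d rk i t ↔ (t < t' ∨ (t = t' ∧ rk i < rk i')) := by
  constructor
  · intro h
    rcases Nat.lt_trichotomy t t' with ht | rfl | ht
    · exact Or.inl ht
    · rcases Nat.lt_trichotomy (rk i) (rk i') with hr | hr | hr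
      · exact Or.inr ⟨rfl, hr⟩
      · have : i = i' := hrk_inj (by simp; omega) (by simp; omega) hr
        subst this; omega
      · have := val_lt_val d rk hd hti' hti (Or.inr ⟨rfl, hr⟩); omega
    · have := val_lt_val d rk hd hti' hti (Or.inl ht); omega
  · exact val_lt_val d rk hd hti hti'

include hrk_inj in
lemma val_inj (hd : ∑ i, d i = n) {i i' : Fin m} {t t' : ℕ}
    (hti : t < d i) (hti' : t' < d i')
    (h : val n d rk i t = val n d rk i' t') : i = i' ∧ t = t' := by
  have h1 : ¬ (t < t' ∨ (t = t' ∧ rk i < rk i')) := by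
    rw [← val_lt_iff hrk_inj hd hti hti']; omega
  have h2 : ¬ (t' < t ∨ (t' = t ∧ rk i' < rk i)) := by
    rw [← val_lt_iff hrk_inj hd hti' hti]; omega
  push_neg at h1 h2
  have ht : t = t' := by omega
  subst ht
  have : rk i = rk i' := by
    have := h1.2 rfl; have := h2.2 rfl; omega
  exact ⟨hrk_inj (by simp; omega) (by simp; omega) this, rfl⟩

end Rank

/-- the support cells of the diagram -/
def cells (n : ℕ) (d : Fin m → ℕ) : Finset (Fin m × ℕ) :=
  (Finset.univ ×ˢ Finset.range (n + 1)).filter fun p => 1 ≤ p.2 ∧ p.2 ≤ d p.1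

lemma mem_cells {n : ℕ} {d : Fin m → ℕ} (hdle : ∀ i, d i ≤ n) {p : Fin m × ℕ} :
    p ∈ cells n d ↔ 1 ≤ p.2 ∧ p.2 ≤ d p.1 := by
  simp only [cells, Finset.mem_filter, Finset.mem_product, Finset.mem_univ,
    Finset.mem_range, true_and]
  constructor
  · tauto
  · intro h; exact ⟨by have := hdle p.1; omega, h⟩

lemma card_cells {n : ℕ} {d : Fin m → ℕ} (hdle : ∀ i, d i ≤ n) :
    (cells n d).card = ∑ i, d i := by
  rw [cells, Finset.card_filter, Finset.sum_product]
  refine Finset.sum_congr rfl fun i _ => ?_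
  rw [← Finset.card_filter]
  have : (Finset.range (n + 1)).filter (fun j => 1 ≤ j ∧ j ≤ d i) = Finset.Icc 1 (d i) := by
    ext j; simp; have := hdle i; omega
  rw [this, Nat.card_Icc]; omega

section Fprops
variable {n pB : ℕ} {d rk : Fin m → ℕ}

lemma pB_le_n (hd : ∑ i, d i = n) (hpB : pB = (Finset.univ.filter fun i : Fin m => 0 < d i).card) :
    pB ≤ n := by
  have h1 : (Finset.univ.filter fun i : Fin m => 0 < d i).card
      = ∑ i ∈ Finset.univ.filter (fun i : Fin m => 0 < d i), 1 := by
    simp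
  have h2 : ∑ i ∈ Finset.univ.filter (fun i : Fin m => 0 < d i), 1
      ≤ ∑ i ∈ Finset.univ.filter (fun i : Fin m => 0 < d i), d i := by
    refine Finset.sum_le_sum fun i hi => ?_
    simp only [Finset.mem_filter] at hi; omega
  have h3 : ∑ i ∈ Finset.univ.filter (fun i : Fin m => 0 < d i), d i ≤ ∑ i, d i :=
    Finset.sum_le_sum_of_subset (Finset.filter_subset _ _)
  omega

lemma F_apply {i : Fin m} {j : ℕ} (h1 : 1 ≤ j) (h2 : j ≤ d i) :
    F n d rk i j = val n d rk i (d i - j) := by simp [F, h1, h2]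

lemma F_ne_zero (hd : ∑ i, d i = n) {i : Fin m} {j : ℕ} :
    F n d rk i j ≠ 0 ↔ (1 ≤ j ∧ j ≤ d i) := by
  constructor
  · intro h
    by_contra hc
    simp [F, hc] at h
  · intro ⟨h1, h2⟩
    rw [F_apply h1 h2]
    have := val_spec n d rk (i := i) (t := d i - j) hd (by omega)
    have := S_mono d (show d i - j + 1 ≤ d i - j + 1 from le_refl _)
    have := S_le d hd (d i - j + 1)
    omega

lemma F_le (hd : ∑ i, d i = n) {i : Fin m} {j : ℕ} : F n d rk i j ≤ n := by
  by_cases h : 1 ≤ j ∧ j ≤ d i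
  · rw [F_apply h.1 h.2]
    have := val_spec n d rk (i := i) (t := d i - j) hd (by omega)
    omega
  · simp [F, h]

variable (hrk_img : (Finset.univ.filter fun i => 0 < d i).image rk = Finset.range pB)
  (hrk_inj : Set.InjOn rk {i | 0 < d i})

include hrk_inj in
lemma F_injOn (hd : ∑ i, d i = n) (hdle : ∀ i, d i ≤ n) :
    Set.InjOn (fun p : Fin m × ℕ => F n d rk p.1 p.2) (cells n d) := by
  intro p hp q hq hpq
  rw [Finset.mem_coe, mem_cells hdle] at hp hq
  simp only [F_apply hp.1 hp.2, F_apply hq.1 hq.2] at hpq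
  have h := val_inj hrk_inj hd (i := p.1) (t := d p.1 - p.2) (by omega)
    (i' := q.1) (t' := d q.1 - q.2) (by omega) hpq
  have hdd : d p.1 = d q.1 := by rw [h.1]
  have h2 := h.2
  have : p.2 = q.2 := by omega
  exact Prod.ext h.1 this

include hrk_inj in
lemma F_image (hd : ∑ i, d i = n) (hdle : ∀ i, d i ≤ n) :
    (cells n d).image (fun p : Fin m × ℕ => F n d rk p.1 p.2) = Finset.Icc 1 n := by
  apply Finset.eq_of_subset_of_card_le
  · intro v hv
    rw [Finset.mem_image] at hv
    obtain ⟨p, hp, rfl⟩ := hv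
    rw [mem_cells hdle] at hp
    have h1 : F n d rk p.1 p.2 ≠ 0 := (F_ne_zero hd).mpr hp
    have h2 : F n d rk p.1 p.2 ≤ n := F_le hd
    rw [Finset.mem_Icc]; omega
  · rw [Finset.card_image_of_injOn (F_injOn hrk_inj hd hdle), card_cells hdle, hd,
      Nat.card_Icc]
    omega

include hrk_inj in
lemma F_num (hd : ∑ i, d i = n) (hdle : ∀ i, d i ≤ n) {v : ℕ} (h1 : 1 ≤ v) (h2 : v ≤ n) :
    ∃! p : Fin m × ℕ, 1 ≤ p.2 ∧ p.2 ≤ d p.1 ∧ F n d rk p.1 p.2 = v := by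
  have hv : v ∈ (cells n d).image (fun p : Fin m × ℕ => F n d rk p.1 p.2) := by
    rw [F_image hrk_inj hd hdle, Finset.mem_Icc]; omega
  rw [Finset.mem_image] at hv
  obtain ⟨p, hp, hpv⟩ := hv
  have hp' := (mem_cells hdle).mp hp
  refine ⟨p, ⟨hp'.1, hp'.2, hpv⟩, ?_⟩
  intro q hq
  exact F_injOn hrk_inj hd hdle (by rw [Finset.mem_coe, mem_cells hdle]; exact ⟨hq.1, hq.2.1⟩)
    (Finset.mem_coe.mpr hp) (by show F n d rk q.1 q.2 = F n d rk p.1 p.2; rw [hq.2.2, hpv])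

include hrk_img hrk_inj in
lemma F_last (hd : ∑ i, d i = n) (hdle : ∀ i, d i ≤ n)
    (hpB : pB = (Finset.univ.filter fun i : Fin m => 0 < d i).card)
    {v : ℕ} (h1 : n - pB + 1 ≤ v) (h2 : v ≤ n) :
    ∃ (i : Fin m) (j : ℕ), 1 ≤ j ∧ j ≤ n ∧ F n d rk i j = v ∧
      ∀ j', j < j' → F n d rk i j' = 0 := by
  have hpn : pB ≤ n := pB_le_n hd hpB
  have hr : n - v < pB := by omega
  have : n - v ∈ Finset.range pB := Finset.mem_range.mpr hr
  rw [← hrk_img, Finset.mem_image] at this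
  obtain ⟨i, hi, hrk⟩ := this
  simp only [Finset.mem_filter] at hi
  refine ⟨i, d i, hi.2, hdle i, ?_, ?_⟩
  · rw [F_apply hi.2 (le_refl _), Nat.sub_self]
    unfold val
    rw [S_zero, C_zero_eq_rk hrk_img hrk_inj hi.2, hrk]
    omega
  · intro j' hj'
    have hnot : ¬(1 ≤ j' ∧ j' ≤ d i) := by omega
    simp [F, hnot]

include hrk_inj in
lemma F_mono (hd : ∑ i, d i = n) {i i' : Fin m} {j j' : ℕ} (hj : 1 ≤ j) (hj' : 1 ≤ j')
    (hlt : F n d rk i' (j' + 1) < F n d rk i (j + 1)) (hpos : 0 < F n d rk i' (j' + 1)) :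
    0 < F n d rk i' j' ∧ F n d rk i' j' < F n d rk i j := by
  have hd1 : j' + 1 ≤ d i' := by
    have := (F_ne_zero (rk := rk) hd (i := i') (j := j' + 1)).mp (by omega)
    omega
  have hd2 : j + 1 ≤ d i := by
    have := (F_ne_zero (rk := rk) hd (i := i) (j := j + 1)).mp (by omega)
    omega
  rw [F_apply (by omega) hd1, F_apply (by omega) hd2] at hlt
  have hk := (val_lt_iff hrk_inj hd (i := i) (t := d i - (j+1)) (by omega)
    (i' := i') (t' := d i' - (j'+1)) (by omega)).mp hlt
  have hgoal : val n d rk i' (d i' - j') < val n d rk i (d i - j) :=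
    val_lt_val d rk hd (by omega) (by omega) (by omega)
  constructor
  · have := (F_ne_zero (rk := rk) hd (i := i') (j := j')).mpr ⟨hj', by omega⟩
    omega
  · rw [F_apply hj' (by omega), F_apply hj (by omega)]
    exact hgoal

end Fprops

section Yprops
variable {n pB : ℕ} {d : Fin m → ℕ} {Y : Fin m → ℕ → ℕ}

section
variable (hd : ∑ i, d i = n) (hdle : ∀ i, d i ≤ n)
  (hsupp : ∀ (i : Fin m) (j : ℕ), Y i j ≠ 0 ↔ (1 ≤ j ∧ j ≤ d i))
  (hnum : ∀ v, 1 ≤ v → v ≤ n → ∃! p : Fin m × ℕ, 1 ≤ p.2 ∧ p.2 ≤ d p.1 ∧ Y p.1 p.2 = v)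

include hd hdle hnum in
lemma Y_mem : ∀ c ∈ cells n d, Y c.1 c.2 ∈ Finset.Icc 1 n := by
  classical
  have hsurj := Finset.surj_on_of_inj_on_of_card_le
    (s := Finset.Icc 1 n) (t := cells n d)
    (fun v hv => (hnum v (Finset.mem_Icc.mp hv).1 (Finset.mem_Icc.mp hv).2).exists.choose)
    (fun v hv => by
      have h := (hnum v (Finset.mem_Icc.mp hv).1 (Finset.mem_Icc.mp hv).2).exists.choose_spec
      rw [mem_cells hdle]
      exact ⟨h.1, h.2.1⟩)
    (fun v u hv hu hvu => by
      have h1 := (hnum v (Finset.mem_Icc.mp hv).1 (Finset.mem_Icc.mp hv).2).exists.choose_spec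
      have h2 := (hnum u (Finset.mem_Icc.mp hu).1 (Finset.mem_Icc.mp hu).2).exists.choose_spec
      rw [← h1.2.2, ← h2.2.2]
      exact congrArg (fun p : Fin m × ℕ => Y p.1 p.2) hvu)
    (by rw [card_cells hdle, hd, Nat.card_Icc]; omega)
  intro c hc
  obtain ⟨v, hv, hcv⟩ := hsurj c hc
  have h := (hnum v (Finset.mem_Icc.mp hv).1 (Finset.mem_Icc.mp hv).2).exists.choose_spec
  rw [hcv, h.2.2]
  exact hv

include hd hdle hnum in
lemma Y_injOn : Set.InjOn (fun p : Fin m × ℕ => Y p.1 p.2) (cells n d) := by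
  intro p hp q hq hpq
  rw [Finset.mem_coe] at hp hq
  have hmem := Y_mem hd hdle hnum p hp
  rw [Finset.mem_Icc] at hmem
  have hp' := (mem_cells hdle).mp hp
  have hq' := (mem_cells hdle).mp hq
  have h := hnum (Y p.1 p.2) hmem.1 hmem.2
  exact h.unique ⟨hp'.1, hp'.2, rfl⟩ ⟨hq'.1, hq'.2, hpq.symm⟩

include hd hdle hnum in
lemma Y_image : (cells n d).image (fun p : Fin m × ℕ => Y p.1 p.2) = Finset.Icc 1 n := by
  apply Finset.eq_of_subset_of_card_le
  · intro v hv
    rw [Finset.mem_image] at hv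
    obtain ⟨p, hp, rfl⟩ := hv
    exact Y_mem hd hdle hnum p hp
  · rw [Finset.card_image_of_injOn (Y_injOn hd hdle hnum), card_cells hdle, hd, Nat.card_Icc]
    omega


variable (hpB : pB = (Finset.univ.filter fun i : Fin m => 0 < d i).card)
  (hlast : ∀ v, n - pB + 1 ≤ v → v ≤ n →
    ∃ (i : Fin m) (j : ℕ), 1 ≤ j ∧ j ≤ n ∧ Y i j = v ∧ ∀ j', j < j' → Y i j' = 0)
  (hmono : ∀ (i i' : Fin m) (j j' : ℕ), 1 ≤ j → 1 ≤ j' →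
    Y i' (j' + 1) < Y i (j + 1) → 0 < Y i' (j' + 1) → (0 < Y i' j' ∧ Y i' j' < Y i j))

include hd hdle hsupp hnum hpB hlast in
lemma end_image : (Finset.univ.filter fun i => 0 < d i).image (fun i => Y i (d i))
    = Finset.Icc (n - pB + 1) n := by
  have hpn : pB ≤ n := pB_le_n hd hpB
  have hsub : Finset.Icc (n - pB + 1) n
      ⊆ (Finset.univ.filter fun i => 0 < d i).image (fun i => Y i (d i)) := by
    intro v hv
    rw [Finset.mem_Icc] at hv
    obtain ⟨i, j, hj1, hjn, hYv, hafter⟩ := hlast v hv.1 hv.2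
    have hji : 1 ≤ j ∧ j ≤ d i := by
      rw [← hsupp]
      omega
    have hjd : j = d i := by
      by_contra hne
      have h1 : Y i (d i) = 0 := hafter (d i) (by omega)
      have h2 : Y i (d i) ≠ 0 := (hsupp i (d i)).mpr ⟨by omega, le_refl _⟩
      exact h2 h1
    rw [Finset.mem_image]
    exact ⟨i, by simp; omega, by rw [← hjd]; exact hYv⟩
  have hcard : ((Finset.univ.filter fun i => 0 < d i).image (fun i => Y i (d i))).card
      ≤ (Finset.Icc (n - pB + 1) n).card := by
    calc ((Finset.univ.filter fun i => 0 < d i).image (fun i => Y i (d i))).card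
        ≤ (Finset.univ.filter fun i : Fin m => 0 < d i).card := Finset.card_image_le
      _ = pB := hpB.symm
      _ = (Finset.Icc (n - pB + 1) n).card := by rw [Nat.card_Icc]; omega
  exact (Finset.eq_of_subset_of_card_le hsub hcard).symm

include hd hdle hsupp hnum hpB hlast in
lemma Y_end_top {i : Fin m} (h : 0 < d i) :
    n - pB + 1 ≤ Y i (d i) ∧ Y i (d i) ≤ n := by
  have : Y i (d i) ∈ Finset.Icc (n - pB + 1) n := by
    rw [← end_image hd hdle hsupp hnum hpB hlast, Finset.mem_image]
    exact ⟨i, by simp [h], rfl⟩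
  rw [Finset.mem_Icc] at this
  exact this

include hd hdle hnum in
lemma Y_end_inj {i i' : Fin m} (h : 0 < d i) (h' : 0 < d i')
    (hY : Y i (d i) = Y i' (d i')) : i = i' := by
  have m1 : ((i, d i) : Fin m × ℕ) ∈ cells n d := (mem_cells hdle).mpr ⟨h, le_refl _⟩
  have m2 : ((i', d i') : Fin m × ℕ) ∈ cells n d := (mem_cells hdle).mpr ⟨h', le_refl _⟩
  have := Y_injOn hd hdle hnum (Finset.mem_coe.mpr m1) (Finset.mem_coe.mpr m2) hY
  exact congrArg Prod.fst this

include hd hdle hsupp hnum hpB hlast hmono in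
lemma dist_lt : ∀ (s : ℕ) (i : Fin m) (j : ℕ) (i' : Fin m) (j' : ℕ),
    1 ≤ j → j ≤ d i → 1 ≤ j' → j' ≤ d i' → d i - j = s → s < d i' - j' →
    Y i' j' < Y i j := by
  intro s
  induction s with
  | zero =>
    intro i j i' j' hj1 hj2 hj1' hj2' hs hs'
    have hji : j = d i := by omega
    have h1 := Y_end_top hd hdle hsupp hnum hpB hlast (show 0 < d i by omega)
    have h2 : Y i' j' ≤ n - pB := by
      by_contra hc
      push_neg at hc
      have hm : Y i' j' ∈ Finset.Icc 1 n :=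
        Y_mem hd hdle hnum (i', j') (by rw [mem_cells hdle]; exact ⟨hj1', hj2'⟩)
      rw [Finset.mem_Icc] at hm
      have : Y i' j' ∈ Finset.Icc (n - pB + 1) n := Finset.mem_Icc.mpr ⟨by omega, hm.2⟩
      rw [← end_image hd hdle hsupp hnum hpB hlast, Finset.mem_image] at this
      obtain ⟨i0, hi0, hYi0⟩ := this
      simp only [Finset.mem_filter, Finset.mem_univ, true_and] at hi0
      have m1 : ((i0, d i0) : Fin m × ℕ) ∈ cells n d := (mem_cells hdle).mpr ⟨hi0, le_refl _⟩
      have m2 : ((i', j') : Fin m × ℕ) ∈ cells n d := (mem_cells hdle).mpr ⟨hj1', hj2'⟩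
      have heq : ((i0, d i0) : Fin m × ℕ) = (i', j') :=
        Y_injOn hd hdle hnum (Finset.mem_coe.mpr m1) (Finset.mem_coe.mpr m2) hYi0
      have hfst : i0 = i' := congrArg Prod.fst heq
      have hsnd : d i0 = j' := congrArg Prod.snd heq
      rw [hfst] at hsnd
      omega
    rw [hji]
    omega
  | succ s ih =>
    intro i j i' j' hj1 hj2 hj1' hj2' hs hs'
    have hIH : Y i' (j' + 1) < Y i (j + 1) :=
      ih i (j + 1) i' (j' + 1) (by omega) (by omega) (by omega) (by omega) (by omega) (by omega)
    have hpos : 0 < Y i' (j' + 1) := by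
      have := (hsupp i' (j' + 1)).mpr ⟨by omega, by omega⟩
      omega
    exact (hmono i i' j j' hj1 hj1' hIH hpos).2

include hd hdle hsupp hnum hmono in
lemma same_dist : ∀ (t : ℕ) (i i' : Fin m), t < d i → t < d i' →
    (Y i' (d i' - t) < Y i (d i - t) ↔ Y i' (d i') < Y i (d i)) := by
  intro t
  induction t with
  | zero => intro i i' _ _; simp
  | succ t ih =>
    intro i i' hti hti'
    have key : Y i' (d i' - (t + 1)) < Y i (d i - (t + 1)) ↔
        Y i' (d i' - t) < Y i (d i - t) := by
      have e1 : d i - (t + 1) + 1 = d i - t := by omega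
      have e2 : d i' - (t + 1) + 1 = d i' - t := by omega
      constructor
      · intro h
        rcases Nat.lt_trichotomy (Y i' (d i' - t)) (Y i (d i - t)) with hlt | heq | hgt
        · exact hlt
        · exfalso
          have m1 : ((i', d i' - t) : Fin m × ℕ) ∈ cells n d :=
            (mem_cells hdle).mpr (show 1 ≤ d i' - t ∧ d i' - t ≤ d i' from ⟨by omega, by omega⟩)
          have m2 : ((i, d i - t) : Fin m × ℕ) ∈ cells n d :=
            (mem_cells hdle).mpr (show 1 ≤ d i - t ∧ d i - t ≤ d i from ⟨by omega, by omega⟩)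
          have hcell : ((i', d i' - t) : Fin m × ℕ) = (i, d i - t) :=
            Y_injOn hd hdle hnum (Finset.mem_coe.mpr m1) (Finset.mem_coe.mpr m2) heq
          have h1 : i' = i := congrArg Prod.fst hcell
          subst h1
          omega
        · exfalso
          have hpos : 0 < Y i (d i - t) := by
            have := (hsupp i (d i - t)).mpr ⟨by omega, by omega⟩
            omega
          have := hmono i' i (d i' - (t+1)) (d i - (t+1)) (by omega) (by omega)
            (by rw [e1, e2]; exact hgt) (by rw [e1]; exact hpos)
          omega
      · intro h
        have hpos : 0 < Y i' (d i' - t) := by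
          have := (hsupp i' (d i' - t)).mpr ⟨by omega, by omega⟩
          omega
        have := hmono i i' (d i - (t+1)) (d i' - (t+1)) (by omega) (by omega)
          (by rw [e1, e2]; exact h) (by rw [e2]; exact hpos)
        exact this.2
    rw [key, ih i i' (by omega) (by omega)]


include hd hdle hnum in
lemma card_gt {v : ℕ} (hv : v ≤ n) :
    ((cells n d).filter fun c => v < Y c.1 c.2).card = n - v := by
  have hinj : Set.InjOn (fun p : Fin m × ℕ => Y p.1 p.2)
      ((cells n d).filter fun c => v < Y c.1 c.2) :=
    (Y_injOn hd hdle hnum).mono (by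
      intro x hx
      simp only [Finset.coe_filter, Set.mem_setOf_eq, Finset.mem_coe] at hx ⊢
      exact hx.1)
  have h1 : ((cells n d).filter fun c => v < Y c.1 c.2).image (fun p : Fin m × ℕ => Y p.1 p.2)
      = Finset.Icc (v + 1) n := by
    rw [← Finset.filter_image, Y_image hd hdle hnum]
    ext u
    simp only [Finset.mem_filter, Finset.mem_Icc]
    omega
  rw [← Finset.card_image_of_injOn hinj, h1, Nat.card_Icc]
  omega

lemma card_dist_lt (hdle : ∀ i, d i ≤ n) (t : ℕ) :
    ((cells n d).filter fun c => d c.1 - c.2 < t).card = S d t := by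
  rw [cells, Finset.filter_filter, Finset.card_filter, Finset.sum_product, S]
  refine Finset.sum_congr rfl fun i _ => ?_
  rw [← Finset.card_filter]
  have he : (Finset.range (n + 1)).filter (fun j => (1 ≤ j ∧ j ≤ d i) ∧ d i - j < t)
      = Finset.Icc (d i - t + 1) (d i) := by
    ext j
    simp only [Finset.mem_filter, Finset.mem_range, Finset.mem_Icc]
    have := hdle i
    omega
  rw [he, Nat.card_Icc]
  omega

lemma card_dist_eq (hdle : ∀ i, d i ≤ n) (rk : Fin m → ℕ) (i : Fin m) (t : ℕ) :
    ((cells n d).filter fun c => d c.1 - c.2 = t ∧ rk c.1 < rk i).card = C d rk i t := by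
  refine Finset.card_nbij' (fun c => c.1) (fun i' => (i', d i' - t)) ?_ ?_ ?_ ?_
  · intro c hc
    simp only [Finset.mem_coe, Finset.mem_filter] at hc
    obtain ⟨hcell, hdist, hrk⟩ := hc
    rw [mem_cells hdle] at hcell
    simp only [Finset.mem_coe, Finset.mem_filter, Finset.mem_univ, true_and]
    exact ⟨by omega, hrk⟩
  · intro i' hi'
    simp only [Finset.mem_coe, Finset.mem_filter, Finset.mem_univ, true_and] at hi'
    simp only [Finset.mem_coe, Finset.mem_filter]
    refine ⟨(mem_cells hdle).mpr (show 1 ≤ d i' - t ∧ d i' - t ≤ d i' from ⟨by omega, by omega⟩),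
      show d i' - (d i' - t) = t by omega, hi'.2⟩
  · intro c hc
    simp only [Finset.mem_coe, Finset.mem_filter] at hc
    obtain ⟨hcell, hdist, hrk⟩ := hc
    rw [mem_cells hdle] at hcell
    have : d c.1 - t = c.2 := by omega
    exact Prod.ext rfl this
  · intro i' _
    rfl

include hd hdle hsupp hnum hpB hlast hmono in
lemma Y_eq_F (rk : Fin m → ℕ) (hrk : ∀ i, 0 < d i → rk i = n - Y i (d i)) :
    ∀ (i : Fin m) (j : ℕ), Y i j = F n d rk i j := by
  intro i j
  by_cases hij : 1 ≤ j ∧ j ≤ d i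
  swap
  · have h0 : Y i j = 0 := by
      by_contra hc
      exact hij ((hsupp i j).mp hc)
    simp [F, hij, h0]
  set t := d i - j with ht
  have hdi : 0 < d i := by omega
  have hrk_iff : ∀ i₀, 0 < d i₀ → ∀ i₁, 0 < d i₁ →
      (rk i₀ < rk i₁ ↔ Y i₁ (d i₁) < Y i₀ (d i₀)) := by
    intro i₀ h₀ i₁ h₁
    have h1 := Y_end_top hd hdle hsupp hnum hpB hlast h₀
    have h2 := Y_end_top hd hdle hsupp hnum hpB hlast h₁
    rw [hrk i₀ h₀, hrk i₁ h₁]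
    omega
  have hiff : ∀ c ∈ cells n d,
      (Y i j < Y c.1 c.2 ↔ (d c.1 - c.2 < t ∨ (d c.1 - c.2 = t ∧ rk c.1 < rk i))) := by
    intro c hc
    obtain ⟨hc1, hc2⟩ := (mem_cells hdle).mp hc
    have hdc : 0 < d c.1 := by omega
    constructor
    · intro h
      by_contra hnc
      push_neg at hnc
      obtain ⟨hge, himp⟩ := hnc
      rcases Nat.lt_or_ge t (d c.1 - c.2) with hgt | hle2
      · have := dist_lt hd hdle hsupp hnum hpB hlast hmono t i j c.1 c.2 hij.1 hij.2 hc1 hc2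
          (by omega) hgt
        omega
      · have heq : d c.1 - c.2 = t := by omega
        have hr := himp heq
        rcases Nat.lt_or_ge (rk i) (rk c.1) with hlt2 | hge2
        · have hYe : Y c.1 (d c.1) < Y i (d i) := (hrk_iff i hdi c.1 hdc).mp hlt2
          have hs := (same_dist hd hdle hsupp hnum hmono t i c.1 (by omega) (by omega)).mpr hYe
          have e1 : d i - t = j := by omega
          have e2 : d c.1 - t = c.2 := by omega
          rw [e1, e2] at hs
          omega
        · have hreq : rk i = rk c.1 := by omega
          have hends : Y c.1 (d c.1) = Y i (d i) := by
            have e1 := hrk c.1 hdc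
            have e2 := hrk i hdi
            have h1 := Y_end_top hd hdle hsupp hnum hpB hlast hdc
            have h2 := Y_end_top hd hdle hsupp hnum hpB hlast hdi
            omega
          have hci : c.1 = i := Y_end_inj hd hdle hnum hdc hdi hends
          have hcj : c.2 = j := by
            have hdd : d c.1 = d i := by rw [hci]
            omega
          rw [hci, hcj] at h
          omega
    · intro h
      rcases h with hlt | ⟨heq, hrk'⟩
      · exact dist_lt hd hdle hsupp hnum hpB hlast hmono (d c.1 - c.2) c.1 c.2 i j hc1 hc2
          hij.1 hij.2 rfl (by omega)
      · have hYe : Y i (d i) < Y c.1 (d c.1) := (hrk_iff c.1 hdc i hdi).mp hrk'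
        have hs := (same_dist hd hdle hsupp hnum hmono t c.1 i (by omega) (by omega)).mpr hYe
        have e1 : d i - t = j := by omega
        have e2 : d c.1 - t = c.2 := by omega
        rwa [e1, e2] at hs
  have hsplit : (cells n d).filter (fun c => Y i j < Y c.1 c.2)
      = ((cells n d).filter fun c => d c.1 - c.2 < t)
        ∪ ((cells n d).filter fun c => d c.1 - c.2 = t ∧ rk c.1 < rk i) := by
    rw [← Finset.filter_or]
    exact Finset.filter_congr hiff
  have hdisj : Disjoint ((cells n d).filter fun c => d c.1 - c.2 < t)
      ((cells n d).filter fun c => d c.1 - c.2 = t ∧ rk c.1 < rk i) := by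
    rw [Finset.disjoint_left]
    intro c h1 h2
    simp only [Finset.mem_filter] at h1 h2
    omega
  have hv : 1 ≤ Y i j ∧ Y i j ≤ n := by
    have := Y_mem hd hdle hnum (i, j) ((mem_cells hdle).mpr hij)
    rw [Finset.mem_Icc] at this
    exact this
  have hA := card_gt hd hdle hnum (v := Y i j) hv.2
  have hB1 := card_dist_lt (d := d) hdle t
  have hB2 := card_dist_eq (d := d) hdle rk i t
  have hcard : n - Y i j = S d t + C d rk i t := by
    rw [← hA, hsplit, Finset.card_union_of_disjoint hdisj, hB1, hB2]
  rw [F_apply hij.1 hij.2, ← ht]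
  have hval := val_spec n d rk (i := i) (t := t) hd (by omega)
  omega

end
end Yprops

section Assemble

def rke (pB : ℕ) (d : Fin m → ℕ) (e : {i : Fin m // 0 < d i} ≃ Fin pB) : Fin m → ℕ :=
  fun i => if h : 0 < d i then (e ⟨i, h⟩ : ℕ) else pB

lemma rke_img {pB : ℕ} {d : Fin m → ℕ} (e : {i : Fin m // 0 < d i} ≃ Fin pB) :
    (Finset.univ.filter fun i => 0 < d i).image (rke pB d e) = Finset.range pB := by
  ext r
  simp only [Finset.mem_image, Finset.mem_filter, Finset.mem_univ, true_and, Finset.mem_range]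
  constructor
  · rintro ⟨i, hi, hr⟩
    rw [rke, dif_pos hi] at hr
    rw [← hr]
    exact (e ⟨i, hi⟩).isLt
  · intro hr
    refine ⟨(e.symm ⟨r, hr⟩).1, (e.symm ⟨r, hr⟩).2, ?_⟩
    rw [rke, dif_pos (e.symm ⟨r, hr⟩).2]
    rw [Subtype.coe_eta, Equiv.apply_symm_apply]

lemma rke_inj {pB : ℕ} {d : Fin m → ℕ} (e : {i : Fin m // 0 < d i} ≃ Fin pB) :
    Set.InjOn (rke pB d e) {i | 0 < d i} := by
  intro x hx y hy hxy
  simp only [Set.mem_setOf_eq] at hx hy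
  simp only [rke, dif_pos hx, dif_pos hy] at hxy
  have h1 : e ⟨x, hx⟩ = e ⟨y, hy⟩ := Fin.ext hxy
  have h2 := e.injective h1
  exact congrArg Subtype.val h2

end Assemble

/-- The admissibility predicate. -/
def Adm (n pB : ℕ) (d : Fin m → ℕ) (Y : Fin m → ℕ → ℕ) : Prop :=
  (∀ (i : Fin m) (j : ℕ), Y i j ≠ 0 ↔ (1 ≤ j ∧ j ≤ d i)) ∧
  (∀ v, 1 ≤ v → v ≤ n →
    ∃! p : Fin m × ℕ, 1 ≤ p.2 ∧ p.2 ≤ d p.1 ∧ Y p.1 p.2 = v) ∧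
  (∀ v, n - pB + 1 ≤ v → v ≤ n →
    ∃ (i : Fin m) (j : ℕ), 1 ≤ j ∧ j ≤ n ∧ Y i j = v ∧ ∀ j', j < j' → Y i j' = 0) ∧
  (∀ (i i' : Fin m) (j j' : ℕ), 1 ≤ j → 1 ≤ j' →
    Y i' (j' + 1) < Y i (j + 1) → 0 < Y i' (j' + 1) →
    (0 < Y i' j' ∧ Y i' j' < Y i j))

theorem main_count {n pB : ℕ} {d : Fin m → ℕ} (hd : ∑ i, d i = n) (hdle : ∀ i, d i ≤ n)
    (hpB : pB = (Finset.univ.filter (fun i : Fin m => 0 < d i)).card) :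
    Nat.card {Y : Fin m → ℕ → ℕ // Adm n pB d Y} = Nat.factorial pB := by
  classical
  have hpn : pB ≤ n := pB_le_n hd hpB
  have hcard_sub : Fintype.card {i : Fin m // 0 < d i} = pB := by
    rw [Fintype.card_subtype, hpB]
  have hpB1 : ∀ i : Fin m, 0 < d i → 0 < pB := fun i h => by
    rw [hpB]
    exact Finset.card_pos.mpr ⟨i, by simp [h]⟩
  -- the rank map associated with a numbering
  let g : (Fin m → ℕ → ℕ) → {i : Fin m // 0 < d i} → Fin pB := fun Y x =>
    ⟨min (n - Y x.1 (d x.1)) (pB - 1), by have := hpB1 x.1 x.2; omega⟩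
  have hgval : ∀ (Y : Fin m → ℕ → ℕ), Adm n pB d Y → ∀ x : {i : Fin m // 0 < d i},
      (g Y x : ℕ) = n - Y x.1 (d x.1) := by
    intro Y hY x
    obtain ⟨hsupp, hnum, hlast, hmono⟩ := hY
    have htop := Y_end_top hd hdle hsupp hnum hpB hlast x.2
    have := hpB1 x.1 x.2
    show min (n - Y x.1 (d x.1)) (pB - 1) = n - Y x.1 (d x.1)
    omega
  have hgbij : ∀ Yh : {Y : Fin m → ℕ → ℕ // Adm n pB d Y}, Function.Bijective (g Yh.1) := by
    intro ⟨Y, hY⟩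
    obtain ⟨hsupp, hnum, hlast, hmono⟩ := hY
    refine (Fintype.bijective_iff_injective_and_card _).mpr ⟨?_, by
      rw [hcard_sub, Fintype.card_fin]⟩
    intro x y hxy
    have h1 := hgval Y ⟨hsupp, hnum, hlast, hmono⟩ x
    have h2 := hgval Y ⟨hsupp, hnum, hlast, hmono⟩ y
    have hvx := congrArg Fin.val hxy
    rw [h1, h2] at hvx
    have htx := Y_end_top hd hdle hsupp hnum hpB hlast x.2
    have hty := Y_end_top hd hdle hsupp hnum hpB hlast y.2
    have hends : Y x.1 (d x.1) = Y y.1 (d y.1) := by omega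
    exact Subtype.ext (Y_end_inj hd hdle hnum x.2 y.2 hends)
  have hFadm : ∀ e : {i : Fin m // 0 < d i} ≃ Fin pB, Adm n pB d (F n d (rke pB d e)) := by
    intro e
    exact ⟨fun i j => F_ne_zero hd,
      fun v h1 h2 => F_num (rke_inj e) hd hdle h1 h2,
      fun v h1 h2 => F_last (rke_img e) (rke_inj e) hd hdle hpB h1 h2,
      fun i i' j j' hj hj' hlt hpos => F_mono (rke_inj e) hd hj hj' hlt hpos⟩
  have hFval : ∀ (e : {i : Fin m // 0 < d i} ≃ Fin pB) (x : {i : Fin m // 0 < d i}),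
      F n d (rke pB d e) x.1 (d x.1) = n - (e x : ℕ) := by
    intro e x
    rw [F_apply x.2 (le_refl _), Nat.sub_self]
    unfold val
    rw [S_zero, C_zero_eq_rk (rke_img e) (rke_inj e) x.2]
    have : rke pB d e x.1 = (e x : ℕ) := by
      rw [rke, dif_pos x.2]
    rw [this]
    omega
  let main : {Y : Fin m → ℕ → ℕ // Adm n pB d Y} ≃ ({i : Fin m // 0 < d i} ≃ Fin pB) :=
    { toFun := fun Yh => Equiv.ofBijective (g Yh.1) (hgbij Yh)
      invFun := fun e => ⟨F n d (rke pB d e), hFadm e⟩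
      left_inv := by
        intro Yh
        obtain ⟨Y, hY⟩ := Yh
        apply Subtype.ext
        funext i j
        obtain ⟨hsupp, hnum, hlast, hmono⟩ := hY
        refine (Y_eq_F hd hdle hsupp hnum hpB hlast hmono _ ?_ i j).symm
        intro i0 h0
        rw [rke, dif_pos h0]
        show ((g Y ⟨i0, h0⟩ : Fin pB) : ℕ) = n - Y i0 (d i0)
        exact hgval Y ⟨hsupp, hnum, hlast, hmono⟩ ⟨i0, h0⟩
      right_inv := by
        intro e
        apply Equiv.ext
        intro x
        apply Fin.ext
        show ((g (F n d (rke pB d e)) x : Fin pB) : ℕ) = (e x : ℕ)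
        rw [hgval _ (hFadm e) x, hFval e x]
        have := (e x).isLt
        omega }
  rw [Nat.card_congr main, Nat.card_eq_fintype_card,
    Fintype.card_equiv (Fintype.equivFinOfCardEq hcard_sub), hcard_sub]

end Stmt9

/-- The number of admissible numbered Young diagrams with a given left-aligned support
pattern (Young diagram with dynamical indices `d`) equals `p_B!`, where `p_B` is the
number of nonzero rows. -/
theorem stmt9 (m n : ℕ) (d : Fin m → ℕ) (hd : ∑ i, d i = n) (hdle : ∀ i, d i ≤ n)
    (pB : ℕ) (hpB : pB = (Finset.univ.filter (fun i : Fin m => 0 < d i)).card) :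
    Nat.card {Y : Fin m → ℕ → ℕ //
      -- support given by the Young diagram `Z` of `d`
      (∀ (i : Fin m) (j : ℕ), Y i j ≠ 0 ↔ (1 ≤ j ∧ j ≤ d i)) ∧
      -- each of `1, …, n` occurs exactly once (a numbering)
      (∀ v, 1 ≤ v → v ≤ n →
        ∃! p : Fin m × ℕ, 1 ≤ p.2 ∧ p.2 ≤ d p.1 ∧ Y p.1 p.2 = v) ∧
      -- (ii) values `n - p_B + 1, …, n` occur as last nonzero entries of rows
      (∀ v, n - pB + 1 ≤ v → v ≤ n →
        ∃ (i : Fin m) (j : ℕ), 1 ≤ j ∧ j ≤ n ∧ Y i j = v ∧ ∀ j', j < j' → Y i j' = 0) ∧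
      -- (iii)
      (∀ (i i' : Fin m) (j j' : ℕ), 1 ≤ j → 1 ≤ j' →
        Y i' (j' + 1) < Y i (j + 1) → 0 < Y i' (j' + 1) →
        (0 < Y i' j' ∧ Y i' j' < Y i j))} = Nat.factorial pB :=
  Stmt9.main_count hd hdle hpB
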